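/- Let μ be a finite measure on a measurable space X, and let Φ_j (j ∈ ℕ) and Φ be measurable functions from X to [0, ∞) such that for every p ∈ [1, ∞), Φ_j and Φ lie in L^p(μ) and ‖Φ_j − Φ‖_{L^p(μ)} → 0 as j → ∞. Then for every p ∈ [1, ∞), the functions Φ_j² log(Φ_j²) and Φ² log(Φ²) lie in L^p(μ) and ‖Φ_j² log(Φ_j²) − Φ² log(Φ²)‖_{L^p(μ)} → 0 as j → ∞. -/

import Mathlib

open MeasureTheory Filter ENNReal

lemma abs_sq_log_sq_le {t : ℝ} (ht : 0 ≤ t) :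
    |t ^ 2 * Real.log (t ^ 2)| ≤ 6 * t * (1 + t ^ 2) := by
  rcases eq_or_lt_of_le ht with h | h
  · simp [← h]
  rcases le_or_gt t 1 with h1 | h1
  · have hl : |Real.log t * t| < 1 := Real.abs_log_mul_self_lt t h h1
    rw [abs_mul, abs_of_nonneg ht] at hl
    have hlog : |Real.log (t ^ 2)| = 2 * |Real.log t| := by
      rw [Real.log_pow]; push_cast; rw [abs_mul]; norm_num
    rw [abs_mul, abs_of_nonneg (sq_nonneg t), hlog]
    nlinarith [abs_nonneg (Real.log t)]
  · have hl : 0 ≤ Real.log t := Real.log_nonneg h1.le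
    have hl2 : Real.log t ≤ t - 1 := Real.log_le_sub_one_of_pos h
    have heq : t ^ 2 * Real.log (t ^ 2) = 2 * t ^ 2 * Real.log t := by
      rw [Real.log_pow]; push_cast; ring
    rw [abs_of_nonneg (by rw [heq]; positivity), heq]
    nlinarith

lemma deriv_sq_log_sq {t : ℝ} (ht : 0 < t) :
    HasDerivAt (fun u : ℝ => u ^ 2 * Real.log (u ^ 2)) (4 * t * Real.log t + 2 * t) t := by
  have h1 : HasDerivAt (fun u : ℝ => u ^ 2) (2 * t) t := by
    simpa using (hasDerivAt_pow 2 t)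
  have h2 : HasDerivAt (fun u : ℝ => Real.log (u ^ 2)) ((2 * t) / t ^ 2) t :=
    h1.log (pow_ne_zero 2 ht.ne')
  have h3 := h1.mul h2
  simp only [Pi.mul_def] at h3
  refine h3.congr_deriv ?_
  rw [Real.log_pow]
  push_cast
  field_simp
  ring

lemma deriv_bound {t : ℝ} (ht : 0 < t) :
    |4 * t * Real.log t + 2 * t| ≤ 6 * (1 + t ^ 2) := by
  rcases le_or_gt t 1 with h1 | h1
  · have hl : |Real.log t * t| < 1 := Real.abs_log_mul_self_lt t ht h1
    rw [abs_mul, abs_of_nonneg ht.le] at hl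
    have h4 : |4 * t * Real.log t| ≤ 4 := by
      rw [show 4 * t * Real.log t = 4 * (Real.log t * t) by ring, abs_mul, abs_mul,
        abs_of_nonneg ht.le]
      rw [abs_of_nonneg (by norm_num : (0:ℝ) ≤ 4)]
      nlinarith [abs_nonneg (Real.log t)]
    calc |4 * t * Real.log t + 2 * t| ≤ |4 * t * Real.log t| + |2 * t| := abs_add_le _ _
    _ ≤ 4 + 2 := by
        refine add_le_add h4 ?_
        rw [abs_of_nonneg (by positivity)]; linarith
    _ ≤ 6 * (1 + t ^ 2) := by nlinarith
  · have hl : 0 ≤ Real.log t := Real.log_nonneg h1.le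
    have hl2 : Real.log t ≤ t - 1 := Real.log_le_sub_one_of_pos ht
    rw [abs_of_nonneg (by positivity)]
    nlinarith

lemma key_lipschitz {a b : ℝ} (ha : 0 ≤ a) (hb : 0 ≤ b) :
    |a ^ 2 * Real.log (a ^ 2) - b ^ 2 * Real.log (b ^ 2)|
      ≤ 6 * (1 + a ^ 2 + b ^ 2) * |a - b| := by
  wlog hab : b ≤ a generalizing a b
  · have h := this hb ha (le_of_not_ge hab)
    rw [abs_sub_comm] at h
    calc |a ^ 2 * Real.log (a ^ 2) - b ^ 2 * Real.log (b ^ 2)|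
        ≤ 6 * (1 + b ^ 2 + a ^ 2) * |b - a| := h
    _ = 6 * (1 + a ^ 2 + b ^ 2) * |a - b| := by rw [abs_sub_comm]; ring
  rcases eq_or_lt_of_le hb with hb0 | hb0
  · have key := abs_sq_log_sq_le ha
    have h0 : b ^ 2 * Real.log (b ^ 2) = 0 := by rw [← hb0]; norm_num
    rw [h0, sub_zero, ← hb0, sub_zero, abs_of_nonneg ha]
    nlinarith
  · have hmvt := Convex.norm_image_sub_le_of_norm_hasDerivWithin_le
      (f := fun u : ℝ => u ^ 2 * Real.log (u ^ 2))
      (f' := fun u => 4 * u * Real.log u + 2 * u)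
      (s := Set.Icc b a) (C := 6 * (1 + a ^ 2 + b ^ 2))
      (fun x hx => (deriv_sq_log_sq (lt_of_lt_of_le hb0 hx.1)).hasDerivWithinAt)
      (fun x hx => by
        have hx0 : 0 < x := lt_of_lt_of_le hb0 hx.1
        have h1 := deriv_bound hx0
        have hx2 : x ^ 2 ≤ a ^ 2 := by nlinarith [hx.2]
        calc ‖4 * x * Real.log x + 2 * x‖ ≤ 6 * (1 + x ^ 2) := h1
        _ ≤ 6 * (1 + a ^ 2 + b ^ 2) := by nlinarith)
      (convex_Icc b a) (Set.left_mem_Icc.2 hab) (Set.right_mem_Icc.2 hab)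
    simpa [Real.norm_eq_abs] using hmvt

lemma memLp_sq_log_sq {X : Type*} [MeasurableSpace X] {μ : Measure X}
    {f : X → ℝ} (hm : Measurable f) (hnn : ∀ x, 0 ≤ f x) {p : ℝ≥0∞}
    (h1 : MemLp f p μ) [IsFiniteMeasure μ]
    (h3 : MemLp f (p * ENNReal.ofReal 3) μ) :
    MemLp (fun x => f x ^ 2 * Real.log (f x ^ 2)) p μ := by
  have heq : (fun x => f x ^ 3) = fun x => ‖f x‖ ^ (3:ℝ) := by
    funext x
    rw [Real.norm_eq_abs, abs_of_nonneg (hnn x), ← Real.rpow_natCast]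
    norm_num
  have hcube : MemLp (fun x => f x ^ 3) p μ := by
    refine ⟨(hm.pow_const 3).aestronglyMeasurable, ?_⟩
    rw [heq, eLpNorm_norm_rpow f (by norm_num : (0:ℝ) < 3)]
    exact ENNReal.rpow_lt_top_of_nonneg (by norm_num) h3.2.ne
  have hg : MemLp (fun x => 6 * f x + 6 * f x ^ 3) p μ :=
    (h1.const_mul 6).add (hcube.const_mul 6)
  refine hg.of_le
    ((hm.pow_const 2).mul (Real.measurable_log.comp (hm.pow_const 2))).aestronglyMeasurable ?_
  refine Filter.Eventually.of_forall fun x => ?_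
  rw [Real.norm_eq_abs, Real.norm_eq_abs]
  have hkey := abs_sq_log_sq_le (hnn x)
  have hx := hnn x
  calc |f x ^ 2 * Real.log (f x ^ 2)| ≤ 6 * f x * (1 + f x ^ 2) := hkey
  _ = 6 * f x + 6 * f x ^ 3 := by ring
  _ ≤ |6 * f x + 6 * f x ^ 3| := le_abs_self _

lemma eLpNorm_sq_log_sq_sub_le {X : Type*} [MeasurableSpace X] {μ : Measure X}
    {a b : X → ℝ} (ha : Measurable a) (hb : Measurable b)
    (hann : ∀ x, 0 ≤ a x) (hbnn : ∀ x, 0 ≤ b x) {p : ℝ≥0∞} :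
    eLpNorm (fun x => a x ^ 2 * Real.log (a x ^ 2) - b x ^ 2 * Real.log (b x ^ 2)) p μ
      ≤ (‖(6:ℝ)‖₊ : ℝ≥0∞) * (eLpNorm (a - b) (2 * p) μ *
        eLpNorm (fun x => 1 + a x ^ 2 + b x ^ 2) (2 * p) μ) := by
  have hpqr : 1 / p = 1 / (2 * p) + 1 / (2 * p) := by
    rw [ENNReal.div_add_div_same]
    have h11 : (1:ℝ≥0∞) + 1 = 2 * 1 := by norm_num
    rw [h11, ENNReal.mul_div_mul_left 1 p two_ne_zero ENNReal.ofNat_ne_top]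
  have step1 : eLpNorm (fun x => a x ^ 2 * Real.log (a x ^ 2)
      - b x ^ 2 * Real.log (b x ^ 2)) p μ
      ≤ eLpNorm (fun x => (6:ℝ) * ((a x - b x) * (1 + a x ^ 2 + b x ^ 2))) p μ := by
    apply eLpNorm_mono
    intro x
    rw [Real.norm_eq_abs, Real.norm_eq_abs]
    have hG : (0:ℝ) ≤ 1 + a x ^ 2 + b x ^ 2 := by positivity
    calc |a x ^ 2 * Real.log (a x ^ 2) - b x ^ 2 * Real.log (b x ^ 2)|
        ≤ 6 * (1 + a x ^ 2 + b x ^ 2) * |a x - b x| := key_lipschitz (hann x) (hbnn x)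
    _ ≤ |6 * ((a x - b x) * (1 + a x ^ 2 + b x ^ 2))| := by
        rw [abs_mul, abs_mul, abs_of_nonneg hG, abs_of_nonneg (by norm_num : (0:ℝ) ≤ 6)]
        apply le_of_eq; ring
  have step2 : eLpNorm (fun x => (6:ℝ) * ((a x - b x) * (1 + a x ^ 2 + b x ^ 2))) p μ
      ≤ (‖(6:ℝ)‖₊ : ℝ≥0∞) *
        eLpNorm (fun x => (a x - b x) * (1 + a x ^ 2 + b x ^ 2)) p μ := by
    have := eLpNorm_const_smul_le (c := (6:ℝ))
      (f := fun x => (a x - b x) * (1 + a x ^ 2 + b x ^ 2)) (p := p) (μ := μ)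
    rw [← enorm_eq_nnnorm]; exact this
  have step3 : eLpNorm (fun x => (a x - b x) * (1 + a x ^ 2 + b x ^ 2)) p μ
      ≤ eLpNorm (a - b) (2 * p) μ * eLpNorm (fun x => 1 + a x ^ 2 + b x ^ 2) (2 * p) μ := by
    have hH : ENNReal.HolderTriple (2 * p) (2 * p) p := ⟨by simpa [one_div] using hpqr.symm⟩
    have := eLpNorm_le_eLpNorm_mul_eLpNorm'_of_norm (μ := μ) (f := a - b)
      (g := fun x => 1 + a x ^ 2 + b x ^ 2)
      ((ha.sub hb).aestronglyMeasurable)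
      ((measurable_const.add (ha.pow_const 2)).add (hb.pow_const 2)).aestronglyMeasurable
      (· * ·) 1 (Filter.Eventually.of_forall fun x => by simp [norm_mul]) (hpqr := hH)
    simpa using this
  calc eLpNorm (fun x => a x ^ 2 * Real.log (a x ^ 2) - b x ^ 2 * Real.log (b x ^ 2)) p μ
      ≤ eLpNorm (fun x => (6:ℝ) * ((a x - b x) * (1 + a x ^ 2 + b x ^ 2))) p μ := step1
  _ ≤ (‖(6:ℝ)‖₊ : ℝ≥0∞) * eLpNorm (fun x => (a x - b x) * (1 + a x ^ 2 + b x ^ 2)) p μ := step2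
  _ ≤ _ := mul_le_mul_right step3 _

/-- If `Φ_j → Φ` in `L^p(μ)` for every finite `p ≥ 1` (μ a finite measure, all functions
nonnegative and measurable), then `Φ_j² log Φ_j² → Φ² log Φ²` in `L^p(μ)` for every
finite `p ≥ 1`.  (In Mathlib, `Real.log 0 = 0`, matching the convention `0 · log 0 = 0`.) -/
theorem sq_log_sq_tendsto_Lp
    {X : Type*} [MeasurableSpace X] (μ : Measure X) [IsFiniteMeasure μ]
    (Φ : ℕ → X → ℝ) (Ψ : X → ℝ)
    (hΦm : ∀ j, Measurable (Φ j)) (hΨm : Measurable Ψ)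
    (hΦnn : ∀ j x, 0 ≤ Φ j x) (hΨnn : ∀ x, 0 ≤ Ψ x)
    (hmem : ∀ p : ℝ≥0∞, 1 ≤ p → p ≠ ⊤ → (∀ j, MemLp (Φ j) p μ) ∧ MemLp Ψ p μ)
    (hconv : ∀ p : ℝ≥0∞, 1 ≤ p → p ≠ ⊤ →
      Tendsto (fun j => eLpNorm (Φ j - Ψ) p μ) atTop (nhds 0)) :
    ∀ p : ℝ≥0∞, 1 ≤ p → p ≠ ⊤ →
      (∀ j, MemLp (fun x => (Φ j x) ^ 2 * Real.log ((Φ j x) ^ 2)) p μ) ∧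
      MemLp (fun x => (Ψ x) ^ 2 * Real.log ((Ψ x) ^ 2)) p μ ∧
      Tendsto (fun j => eLpNorm
        (fun x => (Φ j x) ^ 2 * Real.log ((Φ j x) ^ 2)
          - (Ψ x) ^ 2 * Real.log ((Ψ x) ^ 2)) p μ) atTop (nhds 0) := by
  intro p hp1 hpt
  -- exponents
  have hof3 : (1:ℝ≥0∞) ≤ ENNReal.ofReal 3 := by
    rw [ENNReal.ofReal_ofNat]; norm_num
  have hof2 : (1:ℝ≥0∞) ≤ ENNReal.ofReal 2 := by
    rw [ENNReal.ofReal_ofNat]; norm_num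
  have h3p1 : (1:ℝ≥0∞) ≤ p * ENNReal.ofReal 3 :=
    hp1.trans (le_mul_of_one_le_right' hof3)
  have h3pt : p * ENNReal.ofReal 3 ≠ ⊤ := ENNReal.mul_ne_top hpt ENNReal.ofReal_ne_top
  have hq1 : (1:ℝ≥0∞) ≤ 2 * p := hp1.trans (le_mul_of_one_le_left (by positivity) one_le_two)
  have hqt : 2 * p ≠ ⊤ := ENNReal.mul_ne_top ENNReal.ofNat_ne_top hpt
  have hs1 : (1:ℝ≥0∞) ≤ 2 * p * ENNReal.ofReal 2 := by
    calc (1:ℝ≥0∞) ≤ 2 * p := hq1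
    _ ≤ 2 * p * ENNReal.ofReal 2 := le_mul_of_one_le_right' hof2
  have hst : 2 * p * ENNReal.ofReal 2 ≠ ⊤ :=
    ENNReal.mul_ne_top hqt ENNReal.ofReal_ne_top
  set s := 2 * p * ENNReal.ofReal 2 with hs_def
  -- memberships
  refine ⟨fun j => memLp_sq_log_sq (hΦm j) (hΦnn j) ((hmem p hp1 hpt).1 j)
      ((hmem _ h3p1 h3pt).1 j),
    memLp_sq_log_sq hΨm hΨnn (hmem p hp1 hpt).2 (hmem _ h3p1 h3pt).2, ?_⟩
  -- uniform bound
  set B := eLpNorm Ψ s μ with hB_def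
  have hBt : B ≠ ⊤ := ((hmem s hs1 hst).2).2.ne
  set M := eLpNorm (fun _ : X => (1:ℝ)) (2 * p) μ + (1 + B) ^ (2:ℝ) + B ^ (2:ℝ) with hM_def
  have hMt : M ≠ ⊤ := by
    have hc : eLpNorm (fun _ : X => (1:ℝ)) (2 * p) μ ≠ ⊤ := (memLp_const (1:ℝ)).2.ne
    have h1B : (1:ℝ≥0∞) + B ≠ ⊤ := ENNReal.add_ne_top.2 ⟨ENNReal.one_ne_top, hBt⟩
    exact ENNReal.add_ne_top.2 ⟨ENNReal.add_ne_top.2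
      ⟨hc, ENNReal.rpow_ne_top_of_nonneg (by norm_num) h1B⟩,
      ENNReal.rpow_ne_top_of_nonneg (by norm_num) hBt⟩
  -- square norms
  have hsq : ∀ (f : X → ℝ), Measurable f → (∀ x, 0 ≤ f x) →
      eLpNorm (fun x => f x ^ 2) (2 * p) μ = eLpNorm f s μ ^ (2:ℝ) := by
    intro f hm hnn
    have heq : (fun x => f x ^ 2) = fun x => ‖f x‖ ^ (2:ℝ) := by
      funext x
      rw [Real.norm_eq_abs, abs_of_nonneg (hnn x), ← Real.rpow_natCast]
      norm_num
    rw [heq, eLpNorm_norm_rpow f (by norm_num : (0:ℝ) < 2)]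
  have hΨsq : eLpNorm (fun x => Ψ x ^ 2) (2 * p) μ = B ^ (2:ℝ) := hsq Ψ hΨm hΨnn
  -- eventual bound on G_j
  have hGb : ∀ j, eLpNorm (Φ j - Ψ) s μ ≤ 1 →
      eLpNorm (fun x => 1 + Φ j x ^ 2 + Ψ x ^ 2) (2 * p) μ ≤ M := by
    intro j hj
    have hΦs : eLpNorm (Φ j) s μ ≤ 1 + B := by
      calc eLpNorm (Φ j) s μ = eLpNorm ((Φ j - Ψ) + Ψ) s μ := by rw [sub_add_cancel]
      _ ≤ eLpNorm (Φ j - Ψ) s μ + eLpNorm Ψ s μ :=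
          eLpNorm_add_le ((hΦm j).sub hΨm).aestronglyMeasurable hΨm.aestronglyMeasurable hs1
      _ ≤ 1 + B := add_le_add hj le_rfl
    have hΦsq : eLpNorm (fun x => Φ j x ^ 2) (2 * p) μ ≤ (1 + B) ^ (2:ℝ) := by
      rw [hsq (Φ j) (hΦm j) (hΦnn j)]
      exact ENNReal.rpow_le_rpow hΦs (by norm_num)
    have hfe : (fun x => 1 + Φ j x ^ 2 + Ψ x ^ 2)
        = ((fun _ : X => (1:ℝ)) + fun x => Φ j x ^ 2) + fun x => Ψ x ^ 2 := by
      funext x; simp [Pi.add_apply]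
    calc eLpNorm (fun x => 1 + Φ j x ^ 2 + Ψ x ^ 2) (2 * p) μ
        = eLpNorm (((fun _ : X => (1:ℝ)) + fun x => Φ j x ^ 2) + fun x => Ψ x ^ 2) (2 * p) μ := by
          rw [hfe]
    _ ≤ eLpNorm ((fun _ : X => (1:ℝ)) + fun x => Φ j x ^ 2) (2 * p) μ
          + eLpNorm (fun x => Ψ x ^ 2) (2 * p) μ :=
        eLpNorm_add_le (measurable_const.add ((hΦm j).pow_const 2)).aestronglyMeasurable
          ((hΨm.pow_const 2)).aestronglyMeasurable hq1
    _ ≤ (eLpNorm (fun _ : X => (1:ℝ)) (2 * p) μ + eLpNorm (fun x => Φ j x ^ 2) (2 * p) μ)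
          + eLpNorm (fun x => Ψ x ^ 2) (2 * p) μ := by
        gcongr
        exact eLpNorm_add_le measurable_const.aestronglyMeasurable
          ((hΦm j).pow_const 2).aestronglyMeasurable hq1
    _ ≤ M := by
        rw [hΨsq]
        exact add_le_add (add_le_add le_rfl hΦsq) le_rfl
  -- eventual inequality
  have hev : ∀ᶠ j in atTop, eLpNorm
      (fun x => (Φ j x) ^ 2 * Real.log ((Φ j x) ^ 2) - (Ψ x) ^ 2 * Real.log ((Ψ x) ^ 2)) p μ
      ≤ (‖(6:ℝ)‖₊ : ℝ≥0∞) * (eLpNorm (Φ j - Ψ) (2 * p) μ * M) := by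
    filter_upwards [(hconv s hs1 hst).eventually_le_const zero_lt_one] with j hj
    exact le_trans (eLpNorm_sq_log_sq_sub_le (hΦm j) hΨm (hΦnn j) hΨnn)
      (mul_le_mul_right (mul_le_mul_right (hGb j hj) _) _)
  -- the majorant tends to 0
  have hT : Tendsto (fun j => (‖(6:ℝ)‖₊ : ℝ≥0∞) * (eLpNorm (Φ j - Ψ) (2 * p) μ * M))
      atTop (nhds 0) := by
    have h1 : Tendsto (fun j => eLpNorm (Φ j - Ψ) (2 * p) μ * M) atTop (nhds (0 * M)) :=
      ENNReal.Tendsto.mul_const (hconv (2 * p) hq1 hqt) (Or.inr hMt)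
    rw [zero_mul] at h1
    have h2 := ENNReal.Tendsto.const_mul (a := (‖(6:ℝ)‖₊ : ℝ≥0∞)) h1 (Or.inr ENNReal.coe_ne_top)
    rwa [mul_zero] at h2
  exact tendsto_of_tendsto_of_tendsto_of_le_of_le' tendsto_const_nhds hT
    (Filter.Eventually.of_forall fun j => zero_le) hev
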